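/- For M = k·q with 1 ≤ k ≤ q^{n−1}, the (n,q,k)-OptCeRA code C achieves the maximum possible average Hamming distance: D(C) = n·(1 − 1/q), and consequently D(C) ≥ D(C') for every code C' ⊆ (Fin q)^n with |C'| = M. -/

import Mathlib

open Finset

private lemma digits_inj' (q : ℕ) (hq : 2 ≤ q) : ∀ n t t', t < q^n → t' < q^n →
    (∀ i < n, t / q^i % q = t' / q^i % q) → t = t' := by
  intro n
  induction n with
  | zero => intro t t' ht ht' _; simp at ht ht'; omega
  | succ n ih =>
    intro t t' ht ht' h
    have h0 := h 0 (by omega)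
    simp at h0
    have hdiv : t / q = t' / q := by
      apply ih (t / q) (t' / q)
      · rw [Nat.div_lt_iff_lt_mul (by omega)]
        calc t < q ^ (n+1) := ht
        _ = q ^ n * q := pow_succ q n
      · rw [Nat.div_lt_iff_lt_mul (by omega)]
        calc t' < q ^ (n+1) := ht'
        _ = q ^ n * q := pow_succ q n
      · intro i hi
        have := h (i+1) (by omega)
        rwa [Nat.div_div_eq_div_mul, Nat.div_div_eq_div_mul, ← pow_succ']
    have e1 := Nat.div_add_mod t q
    rw [hdiv] at e1
    have e2 := Nat.div_add_mod t' q
    omega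

-- prefix sums mod q equal implies digits equal
private lemma digit_eq' (q n : ℕ) (hq : 2 ≤ q) (t t' : ℕ)
    (h : ∀ i < n, (∑ l ∈ Finset.range (i+1), t / q^l % q) % q
        = (∑ l ∈ Finset.range (i+1), t' / q^l % q) % q) :
    ∀ i < n, t / q^i % q = t' / q^i % q := by
  intro i
  induction i using Nat.strong_induction_on with
  | _ i ih =>
    intro hi
    have hA : ∑ l ∈ Finset.range i, t / q^l % q = ∑ l ∈ Finset.range i, t' / q^l % q :=
      Finset.sum_congr rfl fun l hl => ih l (Finset.mem_range.mp hl) (by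
        have := Finset.mem_range.mp hl; omega)
    have hi' := h i hi
    rw [Finset.sum_range_succ, Finset.sum_range_succ, hA] at hi'
    have hmod : (t / q^i % q) % q = (t' / q^i % q) % q := by
      have : t / q^i % q ≡ t' / q^i % q [MOD q] :=
        Nat.ModEq.add_left_cancel' _ hi'
      exact this
    have h1 : t / q^i % q < q := Nat.mod_lt _ (by omega)
    have h2 : t' / q^i % q < q := Nat.mod_lt _ (by omega)
    rwa [Nat.mod_eq_of_lt h1, Nat.mod_eq_of_lt h2] at hmod

private lemma pair_count' {α β : Type*} [DecidableEq β] [Fintype β] (s : Finset α) (g : α → β) :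
    ∑ x ∈ s, ∑ y ∈ s, (if g x = g y then (1:ℕ) else 0)
      = ∑ b : β, ((s.filter (fun x => g x = b)).card)^2 := by
  have h1 : ∀ x, ∑ y ∈ s, (if g x = g y then (1:ℕ) else 0)
      = (s.filter (fun y => g y = g x)).card := by
    intro x
    rw [Finset.card_filter]
    exact Finset.sum_congr rfl fun y _ => if_congr eq_comm rfl rfl
  calc ∑ x ∈ s, ∑ y ∈ s, (if g x = g y then (1:ℕ) else 0)
      = ∑ x ∈ s, ((s.filter (fun y => g y = g x)).card) :=
        Finset.sum_congr rfl fun x _ => h1 x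
    _ = ∑ b : β, ∑ x ∈ s.filter (fun x => g x = b), ((s.filter (fun y => g y = g x)).card) :=
        (Finset.sum_fiberwise s g _).symm
    _ = ∑ b : β, ((s.filter (fun x => g x = b)).card)^2 := by
        refine Finset.sum_congr rfl fun b _ => ?_
        have : ∀ x ∈ s.filter (fun x => g x = b),
            ((s.filter (fun y => g y = g x)).card) = (s.filter (fun x => g x = b)).card := by
          intro x hx
          rw [(Finset.mem_filter.mp hx).2]
        rw [Finset.sum_congr rfl this, Finset.sum_const, smul_eq_mul, sq]

private lemma ham_id' (n q : ℕ) (s : Finset (Fin n → Fin q)) :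
    (∑ x ∈ s, ∑ y ∈ s, hammingDist x y)
      + ∑ i : Fin n, ∑ a : Fin q, ((s.filter (fun x => x i = a)).card)^2
    = n * s.card^2 := by
  have hham : ∀ x y : Fin n → Fin q,
      hammingDist x y + ∑ i : Fin n, (if x i = y i then (1:ℕ) else 0) = n := by
    intro x y
    rw [hammingDist, Finset.card_filter, ← Finset.sum_add_distrib]
    have : ∀ i : Fin n, ((if x i ≠ y i then (1:ℕ) else 0) + (if x i = y i then 1 else 0)) = 1 := by
      intro i; by_cases h : x i = y i <;> simp [h]
    rw [Finset.sum_congr rfl fun i _ => this i]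
    simp
  have hswap : ∑ x ∈ s, ∑ y ∈ s, ∑ i : Fin n, (if x i = y i then (1:ℕ) else 0)
      = ∑ i : Fin n, ∑ a : Fin q, ((s.filter (fun x => x i = a)).card)^2 := by
    calc ∑ x ∈ s, ∑ y ∈ s, ∑ i : Fin n, (if x i = y i then (1:ℕ) else 0)
        = ∑ x ∈ s, ∑ i : Fin n, ∑ y ∈ s, (if x i = y i then (1:ℕ) else 0) :=
          Finset.sum_congr rfl fun x _ => Finset.sum_comm
      _ = ∑ i : Fin n, ∑ x ∈ s, ∑ y ∈ s, (if x i = y i then (1:ℕ) else 0) :=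
          Finset.sum_comm
      _ = ∑ i : Fin n, ∑ a : Fin q, ((s.filter (fun x => x i = a)).card)^2 :=
          Finset.sum_congr rfl fun i _ => pair_count' s (fun z => z i)
  calc (∑ x ∈ s, ∑ y ∈ s, hammingDist x y)
        + ∑ i : Fin n, ∑ a : Fin q, ((s.filter (fun x => x i = a)).card)^2
      = (∑ x ∈ s, ∑ y ∈ s, hammingDist x y)
        + ∑ x ∈ s, ∑ y ∈ s, ∑ i : Fin n, (if x i = y i then (1:ℕ) else 0) := by rw [hswap]
    _ = ∑ x ∈ s, ∑ y ∈ s, (hammingDist x y + ∑ i : Fin n, (if x i = y i then (1:ℕ) else 0)) := by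
        rw [← Finset.sum_add_distrib]
        exact Finset.sum_congr rfl fun x _ => (Finset.sum_add_distrib).symm
    _ = ∑ x ∈ s, ∑ y ∈ s, (n:ℕ) := by
        exact Finset.sum_congr rfl fun x _ => Finset.sum_congr rfl fun y _ => hham x y
    _ = n * s.card^2 := by simp [Finset.sum_const, sq]; ring

private lemma shift' (q : ℕ) (hq : 2 ≤ q) (t i : ℕ) :
    ∑ l ∈ Finset.range (i+1), t / q^l % q
      = t % q + ∑ l ∈ Finset.range i, (t/q) / q^l % q := by
  rw [Finset.sum_range_succ']
  simp only [pow_zero, Nat.div_one]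
  rw [add_comm]
  congr 1
  exact Finset.sum_congr rfl fun l _ => by rw [Nat.div_div_eq_div_mul, ← pow_succ']

private lemma count' (q k : ℕ) (hq : 2 ≤ q) (i a : ℕ) (ha : a < q) :
    ((Finset.range (k*q)).filter
      (fun t => (∑ l ∈ Finset.range (i+1), t / q^l % q) % q = a)).card = k := by
  have hq0 : 0 < q := by omega
  set S : ℕ → ℕ := fun u => ∑ l ∈ Finset.range i, u / q^l % q with hS
  have key : ∀ m, m < q → ((q + a - m) % q + m) % q = a := by
    intro m hm
    rw [Nat.mod_add_mod]
    have h1 : q + a - m + m = q + a := by omega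
    rw [h1, Nat.add_mod_left, Nat.mod_eq_of_lt ha]
  set F : ℕ → ℕ := fun u => q * u + (q + a - S u % q) % q with hF
  have hrlt : ∀ u, (q + a - S u % q) % q < q := fun u => Nat.mod_lt _ hq0
  have hFmod : ∀ u, F u % q = (q + a - S u % q) % q := by
    intro u
    rw [hF]
    simp only []
    rw [Nat.mul_add_mod]
    exact Nat.mod_eq_of_lt (hrlt u)
  have hFdiv : ∀ u, F u / q = u := by
    intro u
    rw [hF]
    simp only []
    rw [Nat.mul_add_div hq0, Nat.div_eq_of_lt (hrlt u), add_zero]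
  have hcond : ∀ u, (∑ l ∈ Finset.range (i+1), F u / q^l % q) % q = a := by
    intro u
    rw [shift' q hq (F u) i, hFmod u, hFdiv u]
    have : ((q + a - S u % q) % q + S u) % q
        = ((q + a - S u % q) % q + S u % q) % q := (Nat.add_mod_mod _ _ _).symm
    rw [this]
    exact key _ (Nat.mod_lt _ hq0)
  refine (Finset.card_nbij' (fun t => t / q) F ?_ ?_ ?_ ?_).trans (Finset.card_range k)
  · intro t ht
    rw [Finset.mem_coe, Finset.mem_filter, Finset.mem_range] at ht
    rw [Finset.mem_coe, Finset.mem_range]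
    exact (Nat.div_lt_iff_lt_mul hq0).mpr (by omega)
  · intro u hu
    rw [Finset.mem_coe, Finset.mem_range] at hu
    rw [Finset.mem_coe, Finset.mem_filter, Finset.mem_range]
    refine ⟨?_, hcond u⟩
    have h1 : q * (u + 1) ≤ q * k := Nat.mul_le_mul_left q (by omega)
    have h2 : q * (u + 1) = q * u + q := by ring
    have h3 := hrlt u
    have h4 : F u = q * u + (q + a - S u % q) % q := rfl
    have h6 : q * k = k * q := Nat.mul_comm q k
    omega
  · intro t ht
    rw [Finset.mem_coe, Finset.mem_filter, Finset.mem_range] at ht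
    obtain ⟨htlt, hcnd⟩ := ht
    rw [shift' q hq t i] at hcnd
    set m := S (t / q) % q with hm
    have hmlt : m < q := Nat.mod_lt _ hq0
    have hr0lt : t % q < q := Nat.mod_lt _ hq0
    have hcnd' : (t % q + m) % q = a := by
      rw [hm, Nat.add_mod_mod]
      exact hcnd
    have hdle : (t % q + m) / q ≤ 1 := by
      have : (t % q + m) / q < 2 := (Nat.div_lt_iff_lt_mul hq0).mpr (by omega)
      omega
    have hd := Nat.div_add_mod (t % q + m) q
    rw [hcnd'] at hd
    have hrval : (q + a - m) % q = t % q := by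
      rcases Nat.le_one_iff_eq_zero_or_eq_one.mp hdle with h | h
      · rw [h] at hd
        have h5 : q + a - m = q + t % q := by omega
        rw [h5, Nat.add_mod_left, Nat.mod_eq_of_lt hr0lt]
      · rw [h] at hd
        have h5 : q + a - m = t % q := by omega
        rw [h5, Nat.mod_eq_of_lt hr0lt]
    show F (t / q) = t
    rw [hF]
    simp only []
    rw [← hm, hrval]
    exact Nat.div_add_mod t q
  · intro u _
    exact hFdiv u

private lemma sum_ham_real (n q : ℕ) (s : Finset (Fin n → Fin q)) :
    ∑ x ∈ s, ∑ y ∈ s, (hammingDist x y : ℝ)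
      = n * (s.card:ℝ)^2 - ∑ i : Fin n, ∑ a : Fin q, ((s.filter (fun x => x i = a)).card : ℝ)^2 := by
  have h := congrArg (Nat.cast (R := ℝ)) (ham_id' n q s)
  push_cast at h
  linarith

private lemma main_eq (q n k : ℕ) (hq : 2 ≤ q) (hk : 1 ≤ k)
    (s : Finset (Fin n → Fin q)) (hcard : s.card = k * q)
    (hcount : ∀ (i : Fin n) (a : Fin q), (s.filter (fun x => x i = a)).card = k) :
    (1 / (s.card : ℝ) ^ 2) * ∑ x ∈ s, ∑ y ∈ s, (hammingDist x y : ℝ)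
      = n * (1 - 1/(q:ℝ)) := by
  have h1 : ∑ i : Fin n, ∑ a : Fin q, ((s.filter (fun x => x i = a)).card : ℝ)^2
      = n * ((q:ℝ) * (k:ℝ)^2) := by
    have hinner : ∀ i : Fin n, ∑ a : Fin q, ((s.filter (fun x => x i = a)).card : ℝ)^2
        = (q:ℝ) * (k:ℝ)^2 := by
      intro i
      rw [Finset.sum_congr rfl (fun a _ => by rw [hcount i a])]
      simp [Finset.card_univ]
    rw [Finset.sum_congr rfl fun i _ => hinner i]
    simp [Finset.card_univ]
  rw [sum_ham_real, hcard, h1]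
  have hqR : (q:ℝ) ≠ 0 := Nat.cast_ne_zero.mpr (by omega)
  have hkR : (k:ℝ) ≠ 0 := Nat.cast_ne_zero.mpr (by omega)
  push_cast
  field_simp

private lemma main_bound (q n M : ℕ) (hq : 2 ≤ q) (hM : 0 < M)
    (s : Finset (Fin n → Fin q)) (hcard : s.card = M) :
    (1 / (s.card : ℝ) ^ 2) * ∑ x ∈ s, ∑ y ∈ s, (hammingDist x y : ℝ)
      ≤ n * (1 - 1/(q:ℝ)) := by
  have hqR : (0:ℝ) < (q:ℝ) := by exact_mod_cast (by omega : 0 < q)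
  have hMR : (0:ℝ) < (M:ℝ) := by exact_mod_cast hM
  have hTi : ∀ i : Fin n, ((M:ℝ))^2 / q
      ≤ ∑ a : Fin q, ((s.filter (fun x => x i = a)).card : ℝ)^2 := by
    intro i
    have hsum : ∑ a : Fin q, ((s.filter (fun x => x i = a)).card : ℝ) = M := by
      have := Finset.card_eq_sum_card_fiberwise (fun x (_ : x ∈ s) => Finset.mem_univ (x i))
      rw [← hcard]
      exact_mod_cast this.symm
    have hcs := sq_sum_le_card_mul_sum_sq
      (s := (Finset.univ : Finset (Fin q)))
      (f := fun a => ((s.filter (fun x => x i = a)).card : ℝ))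
    rw [hsum, Finset.card_univ, Fintype.card_fin] at hcs
    rw [div_le_iff₀ hqR]
    linarith
  have hTsum : (n:ℝ) * ((M:ℝ)^2/(q:ℝ))
      ≤ ∑ i : Fin n, ∑ a : Fin q, ((s.filter (fun x => x i = a)).card : ℝ)^2 := by
    calc (n:ℝ) * ((M:ℝ)^2/(q:ℝ)) = ∑ _i : Fin n, ((M:ℝ)^2/(q:ℝ)) := by
          simp [Finset.card_univ]
      _ ≤ _ := Finset.sum_le_sum fun i _ => hTi i
  rw [sum_ham_real, hcard]
  have h2 : 1/((M:ℝ))^2 * ((n:ℝ)*(M:ℝ)^2 - (n:ℝ)*((M:ℝ)^2/(q:ℝ)))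
      = n*(1-1/(q:ℝ)) := by field_simp
  calc (1/((M:ℝ))^2) * ((n:ℝ)*(M:ℝ)^2
        - ∑ i : Fin n, ∑ a : Fin q, ((s.filter (fun x => x i = a)).card : ℝ)^2)
      ≤ 1/((M:ℝ))^2 * ((n:ℝ)*(M:ℝ)^2 - (n:ℝ)*((M:ℝ)^2/(q:ℝ))) := by
        apply mul_le_mul_of_nonneg_left _ (by positivity)
        linarith
    _ = n*(1-1/(q:ℝ)) := h2

/-- For `M = k·q` with `1 ≤ k ≤ q^(n-1)`, the `(n,q,k)`-OptCeRA code
`C` (consisting of the words `c(t)`, `0 ≤ t < M`, where `c(t)_i = (a_1 + ⋯ + a_i) mod q`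
and `(a_n,…,a_1)` are the base-`q` digits of `t`) achieves the maximum possible average
Hamming distance: `D(C) = n·(1 - 1/q)`, and consequently `D(C) ≥ D(C')` for every code
`C' ⊆ (Fin q)ⁿ` with `|C'| = M`. -/
theorem optcera_code_is_mad (q n k : ℕ) (hq : 2 ≤ q) (hn : 1 ≤ n)
    (hk : 1 ≤ k) (hkq : k ≤ q ^ (n - 1)) :
    letI M : ℕ := k * q
    letI c : ℕ → Fin n → Fin q := fun t i =>
      ⟨(∑ l ∈ Finset.range (i.1 + 1), (t / q ^ l % q)) % q, Nat.mod_lt _ (by omega)⟩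
    letI C : Finset (Fin n → Fin q) := (Finset.range M).image c
    letI D : Finset (Fin n → Fin q) → ℝ := fun C' =>
      (1 / (C'.card : ℝ) ^ 2) * ∑ x ∈ C', ∑ y ∈ C', (hammingDist x y : ℝ)
    D C = (n : ℝ) * (1 - 1 / (q : ℝ)) ∧
      ∀ C' : Finset (Fin n → Fin q), C'.card = M → D C' ≤ D C := by
  set c : ℕ → Fin n → Fin q := fun t i =>
    ⟨(∑ l ∈ Finset.range (i.1 + 1), (t / q ^ l % q)) % q, Nat.mod_lt _ (by omega)⟩ with hc
  set C : Finset (Fin n → Fin q) := (Finset.range (k * q)).image c with hC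
  have hMq : k * q ≤ q ^ n := by
    calc k * q ≤ q ^ (n - 1) * q := Nat.mul_le_mul_right q hkq
      _ = q ^ n := by
        rw [← pow_succ]
        congr 1
        omega
  have hinj : Set.InjOn c ↑(Finset.range (k * q)) := by
    intro t ht t' ht' he
    rw [Finset.mem_coe, Finset.mem_range] at ht ht'
    refine digits_inj' q hq n t t' (lt_of_lt_of_le ht hMq) (lt_of_lt_of_le ht' hMq) ?_
    refine digit_eq' q n hq t t' ?_ 
    intro i hi
    exact congrArg Fin.val (congrFun he ⟨i, hi⟩)
  have hcard : C.card = k * q := by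
    rw [hC, Finset.card_image_of_injOn hinj, Finset.card_range]
  have hcount : ∀ (i : Fin n) (a : Fin q), (C.filter (fun x => x i = a)).card = k := by
    intro i a
    rw [hC, Finset.filter_image]
    rw [Finset.card_image_of_injOn (hinj.mono (Finset.coe_subset.mpr (Finset.filter_subset _ _)))]
    rw [Finset.filter_congr (q := fun t =>
        (∑ l ∈ Finset.range (i.1 + 1), (t / q ^ l % q)) % q = a.1)
      (fun t _ => by simp [hc, Fin.ext_iff])]
    exact count' q k hq i.1 a.1 a.isLt
  have heq := main_eq q n k hq hk C hcard hcount
  refine ⟨heq, ?_⟩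
  intro C' hC'
  calc (1 / (C'.card : ℝ) ^ 2) * ∑ x ∈ C', ∑ y ∈ C', (hammingDist x y : ℝ)
      ≤ n * (1 - 1/(q:ℝ)) :=
        main_bound q n (k * q) hq (by positivity) C' hC'
    _ = (1 / (C.card : ℝ) ^ 2) * ∑ x ∈ C, ∑ y ∈ C, (hammingDist x y : ℝ) := heq.symm
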